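/- Let C ⊆ L^∞(Ω, F, P) be a norm-closed convex cone with C ∩ L^∞_+ = {0} and -L^∞_+ ⊆ C. Then the set C₁ = {x ∈ C : ess inf x ≥ -1} is bounded in probability, i.e., for every α > 0 there exists M > 0 such that P(x ≥ M) ≤ α for all x ∈ C₁. -/

import Mathlib

open MeasureTheory Filter Topology

set_option maxHeartbeats 2000000

section Aux



variable {Ω : Type*} [MeasurableSpace Ω]

/-- a.e. bound for L∞ functions -/
lemma linf_ae_le_norm (P : Measure Ω) (x : Lp ℝ ⊤ P) : ∀ᵐ ω ∂P, ‖x ω‖ ≤ ‖x‖ := by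
  have h := MeasureTheory.enorm_ae_le_eLpNormEssSup (⇑x) P
  have hne : eLpNormEssSup (⇑x) P ≠ ⊤ := by
    rw [← eLpNorm_exponent_top]; exact Lp.eLpNorm_ne_top x
  filter_upwards [h] with ω hω
  have := ENNReal.toReal_mono hne hω
  simpa [Lp.norm_def, eLpNorm_exponent_top] using this

lemma ae_neg_one_le (P : Measure Ω) (x : Lp ℝ ⊤ P) (hinf : (-1:ℝ) ≤ essInf (⇑x) P) :
    ∀ᵐ ω ∂P, (-1:ℝ) ≤ x ω := by
  have hb : IsBoundedUnder (· ≥ ·) (ae P) ⇑x := by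
    refine isBoundedUnder_of_eventually_ge (a := -‖x‖) ?_
    filter_upwards [linf_ae_le_norm P x] with ω h
    have : |x ω| ≤ ‖x‖ := by rwa [← Real.norm_eq_abs]
    linarith [neg_le_of_abs_le this]
  filter_upwards [ae_essInf_le (f := ⇑x) (μ := P) hb] with ω h
  linarith

lemma truncAux (P : Measure Ω) [IsProbabilityMeasure P]
    (C : Set (Lp ℝ ⊤ P)) (hconv : Convex ℝ C)
    (hcone : ∀ (c : ℝ), 0 ≤ c → ∀ x ∈ C, c • x ∈ C)
    (hneg : ∀ x : Lp ℝ ⊤ P, 0 ≤ᵐ[P] ⇑x → -x ∈ C)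
    {α M : ℝ} (hα : 0 < α) (hM : 1 ≤ M)
    {x : Lp ℝ ⊤ P} (hx : x ∈ C) (hinf : (-1:ℝ) ≤ essInf (⇑x) P)
    (hP : ENNReal.ofReal α < P {ω | M ≤ x ω}) :
    ∃ h ∈ C, (⇑h ≤ᵐ[P] fun _ => (1:ℝ)) ∧ (∀ᵐ ω ∂P, -M⁻¹ ≤ h ω) ∧ α - M⁻¹ ≤ ∫ ω, h ω ∂P := by
  have hM0 : (0:ℝ) < M := lt_of_lt_of_le one_pos hM
  have hadd : ∀ a ∈ C, ∀ b ∈ C, a + b ∈ C := by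
    intro a ha b hb
    have h2 := hconv ha hb (by norm_num : (0:ℝ) ≤ 1/2) (by norm_num : (0:ℝ) ≤ 1/2) (by norm_num)
    have h3 := hcone 2 (by norm_num) _ h2
    have : (2:ℝ) • ((1/2 : ℝ) • a + (1/2 : ℝ) • b) = a + b := by
      rw [smul_add, smul_smul, smul_smul]; norm_num
    rwa [this] at h3
  -- the scaled element
  set g : Lp ℝ ⊤ P := M⁻¹ • x with hgdef
  have hgC : g ∈ C := hcone _ (by positivity) _ hx
  have hg_eq : ⇑g =ᵐ[P] fun ω => M⁻¹ * x ω := by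
    filter_upwards [Lp.coeFn_smul M⁻¹ x] with ω h
    simpa using h
  -- constant one
  set one : Lp ℝ ⊤ P := (memLp_const (1:ℝ)).toLp _ with honedef
  have hone : ⇑one =ᵐ[P] fun _ => (1:ℝ) := MemLp.coeFn_toLp _
  set q : Lp ℝ ⊤ P := Lp.posPart (g - one) with hqdef
  have hq_nonneg : 0 ≤ᵐ[P] ⇑q := by
    filter_upwards [Lp.coeFn_posPart (g - one)] with ω h
    rw [h]; exact le_max_right _ _
  set h : Lp ℝ ⊤ P := g - q with hhdef
  have hhC : h ∈ C := by
    have := hadd g hgC (-q) (hneg q hq_nonneg)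
    simpa [hhdef, sub_eq_add_neg] using this
  have hh_eq : ∀ᵐ ω ∂P, h ω = min (g ω) 1 := by
    filter_upwards [Lp.coeFn_sub g q, Lp.coeFn_posPart (g - one), Lp.coeFn_sub g one, hone]
      with ω h1 h2 h3 h4
    rw [h1]
    simp only [Pi.sub_apply] at *
    rw [h2, h3, h4]
    rcases le_total (g ω) 1 with hc | hc
    · rw [max_eq_right (by linarith), min_eq_left hc]; ring
    · rw [max_eq_left (by linarith), min_eq_right hc]; ring
  have hx_lb := ae_neg_one_le P x hinf
  have hg_lb : ∀ᵐ ω ∂P, -M⁻¹ ≤ g ω := by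
    filter_upwards [hg_eq, hx_lb] with ω h1 h2
    rw [h1]
    have := mul_le_mul_of_nonneg_left h2 (by positivity : (0:ℝ) ≤ M⁻¹)
    linarith
  have hh_lb : ∀ᵐ ω ∂P, -M⁻¹ ≤ h ω := by
    filter_upwards [hh_eq, hg_lb] with ω h1 h2
    rw [h1]
    have : -M⁻¹ ≤ (1:ℝ) := by
      have : (0:ℝ) < M⁻¹ := by positivity
      linarith
    exact le_min h2 this
  have hh_ub : ⇑h ≤ᵐ[P] fun _ => (1:ℝ) := by
    filter_upwards [hh_eq] with ω h1
    rw [h1]; exact min_le_right _ _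
  -- measurable set A
  obtain ⟨A, hAmeas, hAP, hAf⟩ : ∃ A, MeasurableSet A ∧ ENNReal.ofReal α ≤ P A ∧
      ∀ᵐ ω ∂P, ω ∈ A → M ≤ x ω := by
    have hsm := Lp.aestronglyMeasurable x
    have hmk : ⇑x =ᵐ[P] hsm.mk ⇑x := hsm.ae_eq_mk
    refine ⟨{ω | M ≤ hsm.mk ⇑x ω}, ?_, ?_, ?_⟩
    · exact measurableSet_le measurable_const hsm.stronglyMeasurable_mk.measurable
    · refine le_trans (le_of_lt hP) (measure_mono_ae ?_)
      filter_upwards [hmk] with ω h hmem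
      show M ≤ _
      rw [← h]; exact hmem
    · filter_upwards [hmk] with ω h hmem
      have hmem' : M ≤ AEStronglyMeasurable.mk (⇑x) hsm ω := hmem
      rw [h]; exact hmem'
  have hind : ∀ᵐ ω ∂P, A.indicator (fun _ => (1:ℝ)) ω - M⁻¹ ≤ h ω := by
    filter_upwards [hh_eq, hg_eq, hAf, hg_lb] with ω h1 h2 h3 h4
    by_cases hω : ω ∈ A
    · have hg1 : (1:ℝ) ≤ g ω := by
        rw [h2]
        have := mul_le_mul_of_nonneg_left (h3 hω) (by positivity : (0:ℝ) ≤ M⁻¹)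
        rwa [inv_mul_cancel₀ (ne_of_gt hM0)] at this
      rw [Set.indicator_of_mem hω, h1, min_eq_right hg1]
      have : (0:ℝ) < M⁻¹ := by positivity
      linarith
    · rw [Set.indicator_of_notMem hω, h1]
      have : -M⁻¹ ≤ min (g ω) 1 := by
        refine le_min h4 ?_
        have : (0:ℝ) < M⁻¹ := by positivity
        linarith
      linarith
  have hint : Integrable (⇑h) P := (Lp.memLp h).integrable le_top
  have hindint : Integrable (fun ω => A.indicator (fun _ => (1:ℝ)) ω - M⁻¹) P :=
    ((integrable_const (1:ℝ)).indicator hAmeas).sub (integrable_const _)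
  have hmono := integral_mono_ae hindint hint hind
  rw [integral_sub ((integrable_const (1:ℝ)).indicator hAmeas) (integrable_const _),
    integral_indicator_const (1:ℝ) hAmeas, integral_const] at hmono
  have hPA : α ≤ (P A).toReal := by
    have h1 := ENNReal.toReal_mono (measure_ne_top P A) hAP
    rwa [ENNReal.toReal_ofReal hα.le] at h1
  refine ⟨h, hhC, hh_ub, hh_lb, ?_⟩
  simp only [measure_univ, ENNReal.toReal_one, measureReal_def, smul_eq_mul, one_mul, mul_one] at hmono
  linarith


lemma cauchy_est {a b s t d δ dN ε : ℝ} (hpar : s*s + t*t = 2*(a*a+b*b))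
    (ha : a < d+δ) (hb : b < d+δ) (ha0 : 0 ≤ a) (hb0 : 0 ≤ b) (hs : 2*dN ≤ s)
    (hdN0 : 0 ≤ dN) (hdND : d - δ < dN) (hdNd : dN ≤ d) (hd0 : 0 ≤ d) (hd1 : d ≤ 1)
    (hδ1 : δ ≤ 1) (hδpos : 0 < δ) (hε : 0 < ε) (hδε : δ ≤ ε^2/21) (ht0 : 0 ≤ t) : t < ε := by
  by_contra hc
  push_neg at hc
  have h2 : ε * ε ≤ t * t := mul_le_mul hc hc hε.le ht0
  have hs2 : (2*dN)*(2*dN) ≤ s*s := mul_le_mul hs hs (by linarith) (by linarith)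
  have haa : a*a ≤ (d+δ)*(d+δ) := by nlinarith
  have hbb : b*b ≤ (d+δ)*(d+δ) := by nlinarith
  have hdd : d*d - 2*d*δ ≤ dN*dN := by
    have key : 0 ≤ (dN - (d - δ)) * (dN + d) := mul_nonneg (by linarith) (by linarith)
    have key2 : δ * dN ≤ δ * d := mul_le_mul_of_nonneg_left hdNd hδpos.le
    nlinarith [key, key2]
  nlinarith



-- main auxiliary section

variable {Ω : Type*} [MeasurableSpace Ω]

private theorem stmt0_aux (P : Measure Ω) [IsProbabilityMeasure P]
    (C : Set (Lp ℝ ⊤ P))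
    (hclosed : IsClosed C) (hconv : Convex ℝ C)
    (hcone : ∀ (c : ℝ), 0 ≤ c → ∀ x ∈ C, c • x ∈ C)
    (hC_pos : C ∩ {x : Lp ℝ ⊤ P | 0 ≤ᵐ[P] ⇑x} = {0})
    (hneg : ∀ x : Lp ℝ ⊤ P, 0 ≤ᵐ[P] ⇑x → -x ∈ C) :
    ∀ α : ℝ, 0 < α → ∃ M : ℝ, 0 < M ∧
      ∀ x ∈ C, (-1 : ℝ) ≤ essInf (⇑x) P →
        P {ω | M ≤ x ω} ≤ ENNReal.ofReal α := by
  classical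
  intro α hα
  by_contra hcon
  push_neg at hcon
  have hadd : ∀ a ∈ C, ∀ b ∈ C, a + b ∈ C := by
    intro a ha b hb
    have h2 := hconv ha hb (by norm_num : (0:ℝ) ≤ 1/2) (by norm_num : (0:ℝ) ≤ 1/2) (by norm_num)
    have h3 := hcone 2 (by norm_num) _ h2
    have : (2:ℝ) • ((1/2 : ℝ) • a + (1/2 : ℝ) • b) = a + b := by
      rw [smul_add, smul_smul, smul_smul]; norm_num
    rwa [this] at h3
  -- Step A: the truncated sequence
  have key : ∀ n : ℕ, ∃ h ∈ C, (⇑h ≤ᵐ[P] fun _ => (1:ℝ)) ∧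
      (∀ᵐ ω ∂P, -((n:ℝ)+1)⁻¹ ≤ h ω) ∧ α - ((n:ℝ)+1)⁻¹ ≤ ∫ ω, h ω ∂P := by
    intro n
    obtain ⟨x, hxC, hxinf, hxP⟩ := hcon ((n:ℝ)+1) (by positivity)
    exact truncAux P C hconv hcone hneg hα (by push_cast; linarith [Nat.cast_nonneg (α := ℝ) n]) hxC hxinf hxP
  choose h hhC hh1 hh2 hh3 using key
  -- Step B: map to L², minimal-norm Cauchy sequence
  set T : Lp ℝ ⊤ P → Lp ℝ 2 P :=
    fun x => MemLp.toLp ⇑x ((Lp.memLp x).mono_exponent le_top) with hTdef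
  have hT_ae : ∀ x : Lp ℝ ⊤ P, ⇑(T x) =ᵐ[P] ⇑x := fun x => MemLp.coeFn_toLp _
  set K : ℕ → Set (Lp ℝ ⊤ P) := fun n =>
    {c | c ∈ C ∧ (⇑c ≤ᵐ[P] fun _ => (1:ℝ)) ∧ (∀ᵐ ω ∂P, -((n:ℝ)+1)⁻¹ ≤ c ω) ∧
      α - ((n:ℝ)+1)⁻¹ ≤ ∫ ω, c ω ∂P} with hKdef
  have hhK : ∀ n, h n ∈ K n := fun n => ⟨hhC n, hh1 n, hh2 n, hh3 n⟩
  have hKanti : ∀ {n m : ℕ}, n ≤ m → K m ⊆ K n := by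
    intro n m hnm c hc
    have hinv : ((m:ℝ)+1)⁻¹ ≤ ((n:ℝ)+1)⁻¹ := by
      have hc : ((n:ℝ)+1) ≤ ((m:ℝ)+1) := by
        have : (n:ℝ) ≤ (m:ℝ) := Nat.cast_le.2 hnm
        linarith
      exact inv_anti₀ (by positivity) hc
    refine ⟨hc.1, hc.2.1, ?_, ?_⟩
    · filter_upwards [hc.2.2.1] with ω hω; linarith
    · linarith [hc.2.2.2]
  have hKconv : ∀ n, Convex ℝ (K n) := by
    intro n x hx y hy a b ha hb hab
    have hxy : ⇑(a • x + b • y) =ᵐ[P] fun ω => a * x ω + b * y ω := by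
      filter_upwards [Lp.coeFn_add (a • x) (b • y), Lp.coeFn_smul a x, Lp.coeFn_smul b y]
        with ω h1 h2 h3
      rw [h1]; simp [h2, h3]
    refine ⟨hconv hx.1 hy.1 ha hb hab, ?_, ?_, ?_⟩
    · filter_upwards [hxy, hx.2.1, hy.2.1] with ω h1 h2 h3
      rw [h1]
      have h2' : x ω ≤ 1 := h2
      have h3' : y ω ≤ 1 := h3
      nlinarith [mul_le_mul_of_nonneg_left h2' ha, mul_le_mul_of_nonneg_left h3' hb]
    · filter_upwards [hxy, hx.2.2.1, hy.2.2.1] with ω h2 h3 h4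
      rw [h2]
      have hs := add_le_add (mul_le_mul_of_nonneg_left h3 ha) (mul_le_mul_of_nonneg_left h4 hb)
      have heq : a * -(((n:ℝ)+1)⁻¹) + b * -(((n:ℝ)+1)⁻¹) = (a+b) * -(((n:ℝ)+1)⁻¹) := by ring
      rw [heq, hab, one_mul] at hs
      exact hs
    · have hix : Integrable (⇑x) P := (Lp.memLp x).integrable le_top
      have hiy : Integrable (⇑y) P := (Lp.memLp y).integrable le_top
      rw [integral_congr_ae hxy, integral_add (hix.const_mul a) (hiy.const_mul b),
        integral_const_mul, integral_const_mul]
      have hs := add_le_add (mul_le_mul_of_nonneg_left hx.2.2.2 ha)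
        (mul_le_mul_of_nonneg_left hy.2.2.2 hb)
      have heq : a * (α - ((n:ℝ)+1)⁻¹) + b * (α - ((n:ℝ)+1)⁻¹)
          = (a+b) * (α - ((n:ℝ)+1)⁻¹) := by ring
      rw [heq, hab, one_mul] at hs
      exact hs
  -- images in L²
  set S : ℕ → Set (Lp ℝ 2 P) := fun n => T '' K n with hSdef
  have hSne : ∀ n, (S n).Nonempty := fun n => ⟨T (h n), h n, hhK n, rfl⟩
  have hK_abs : ∀ {n : ℕ} {c : Lp ℝ ⊤ P}, c ∈ K n → ∀ᵐ ω ∂P, |c ω| ≤ 1 := by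
    intro n c hc
    filter_upwards [hc.2.1, hc.2.2.1] with ω h1 h2
    have hinv : ((n:ℝ)+1)⁻¹ ≤ 1 := by
      rw [inv_le_one_iff₀]; right; push_cast; linarith [Nat.cast_nonneg (α := ℝ) n]
    rw [abs_le]
    exact ⟨by linarith, h1⟩
  have hSbound : ∀ n, ∀ y ∈ S n, ‖y‖ ≤ 1 := by
    rintro n y ⟨c, hc, rfl⟩
    have hb : ∀ᵐ ω ∂P, ‖(T c) ω‖ ≤ 1 := by
      filter_upwards [hT_ae c, hK_abs hc] with ω h1 h2
      rw [h1, Real.norm_eq_abs]; exact h2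
    have := Lp.norm_le_of_ae_bound (zero_le_one) hb
    simpa [measureUnivNNReal, measure_univ] using this
  have hSconv : ∀ n, Convex ℝ (S n) := by
    rintro n y₁ ⟨c₁, hc₁, rfl⟩ y₂ ⟨c₂, hc₂, rfl⟩ a b ha hb hab
    refine ⟨a • c₁ + b • c₂, hKconv n hc₁ hc₂ ha hb hab, ?_⟩
    apply Lp.ext
    have e1 := hT_ae (a • c₁ + b • c₂)
    have e2 : ⇑(a • c₁ + b • c₂) =ᵐ[P] fun ω => a * c₁ ω + b * c₂ ω := by
      filter_upwards [Lp.coeFn_add (a • c₁) (b • c₂), Lp.coeFn_smul a c₁, Lp.coeFn_smul b c₂]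
        with ω h1 h2 h3
      rw [h1]; simp [h2, h3]
    have e3 : ⇑(a • T c₁ + b • T c₂) =ᵐ[P] fun ω => a * c₁ ω + b * c₂ ω := by
      filter_upwards [Lp.coeFn_add (a • T c₁) (b • T c₂), Lp.coeFn_smul a (T c₁),
        Lp.coeFn_smul b (T c₂), hT_ae c₁, hT_ae c₂] with ω h1 h2 h3 h4 h5
      rw [h1]; simp [h2, h3, h4, h5]
    exact (e1.trans e2).trans e3.symm
  have hSanti : ∀ {n m : ℕ}, n ≤ m → S m ⊆ S n := fun hnm => Set.image_mono (hKanti hnm)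
  -- minimal norm sequence
  set dn : ℕ → ℝ := fun n => Metric.infDist 0 (S n) with hdndef
  have hdn0 : ∀ n, 0 ≤ dn n := fun n => Metric.infDist_nonneg
  have hdn1 : ∀ n, dn n ≤ 1 := by
    intro n
    refine le_trans (Metric.infDist_le_dist_of_mem ⟨h n, hhK n, rfl⟩) ?_
    rw [dist_zero_left]
    exact hSbound n _ ⟨h n, hhK n, rfl⟩
  have hdmono : Monotone dn := fun a b hab =>
    Metric.infDist_le_infDist_of_subset (hSanti hab) (hSne b)
  have hbdd : BddAbove (Set.range dn) := by
    refine ⟨1, ?_⟩; rintro _ ⟨n, rfl⟩; exact hdn1 n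
  set d : ℝ := ⨆ n, dn n with hddef
  have hdle : ∀ n, dn n ≤ d := fun n => le_ciSup hbdd n
  have hd1 : d ≤ 1 := ciSup_le hdn1
  have hd0 : 0 ≤ d := le_trans (hdn0 0) (hdle 0)
  -- choose near-minimal elements
  have hvex : ∀ n : ℕ, ∃ c ∈ K n, dist 0 (T c) < d + ((n:ℝ)+1)⁻¹ := by
    intro n
    have hlt : Metric.infDist 0 (S n) < d + ((n:ℝ)+1)⁻¹ :=
      lt_of_le_of_lt (hdle n) (lt_add_of_pos_right _ (by positivity))
    obtain ⟨y, hyS, hyd⟩ := (Metric.infDist_lt_iff (hSne n)).1 hlt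
    obtain ⟨c, hcK, rfl⟩ := hyS
    exact ⟨c, hcK, hyd⟩
  choose c hcK hcd using hvex
  set v : ℕ → Lp ℝ 2 P := fun n => T (c n) with hvdef
  have hvnorm : ∀ n, ‖v n‖ < d + ((n:ℝ)+1)⁻¹ := by
    intro n
    have := hcd n
    rwa [dist_zero_left] at this
  have hvmem : ∀ {n m : ℕ}, n ≤ m → v m ∈ S n := fun {n m} hnm => hSanti hnm ⟨c m, hcK m, rfl⟩
  have hcauchy : CauchySeq v := by
    rw [Metric.cauchySeq_iff]
    intro ε hε
    set δ : ℝ := min 1 (ε^2/21) with hδdef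
    have hδpos : 0 < δ := lt_min one_pos (by positivity)
    have hδ1 : δ ≤ 1 := min_le_left _ _
    have hδε : δ ≤ ε^2/21 := min_le_right _ _
    obtain ⟨N₁, hN₁⟩ := exists_lt_of_lt_ciSup (show d - δ < ⨆ n, dn n by rw [← hddef]; linarith)
    obtain ⟨N₂, hN₂⟩ := exists_nat_gt δ⁻¹
    refine ⟨max N₁ N₂, ?_⟩
    intro m hm n hn
    have hkey : ∀ k, max N₁ N₂ ≤ k → ‖v k‖ < d + δ := by
      intro k hk
      have hk2 : (N₂ : ℝ) ≤ (k : ℝ) := Nat.cast_le.2 (le_trans (le_max_right _ _) hk)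
      have h1 : ((k:ℝ)+1)⁻¹ < δ := by
        rw [inv_lt_comm₀ (by positivity) hδpos]
        calc δ⁻¹ < (N₂:ℝ) := hN₂
        _ ≤ (k:ℝ) + 1 := by linarith
      linarith [hvnorm k]
    have hmidS : (1/2 : ℝ) • (v m + v n) ∈ S N₁ := by
      have h1 : v m ∈ S N₁ := hvmem (le_trans (le_max_left _ _) hm)
      have h2 : v n ∈ S N₁ := hvmem (le_trans (le_max_left _ _) hn)
      have := hSconv N₁ h1 h2 (by norm_num : (0:ℝ) ≤ 1/2) (by norm_num : (0:ℝ) ≤ 1/2)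
        (by norm_num)
      simpa [smul_add] using this
    have hmid : dn N₁ ≤ (1/2 : ℝ) * ‖v m + v n‖ := by
      have := Metric.infDist_le_dist_of_mem (x := (0 : Lp ℝ 2 P)) hmidS
      rw [dist_zero_left, norm_smul] at this
      simpa using this
    have hpar := parallelogram_law_with_norm ℝ (v m) (v n)
    have ha := hkey m hm
    have hb := hkey n hn
    have ha0 : 0 ≤ ‖v m‖ := norm_nonneg _
    have hb0 : 0 ≤ ‖v n‖ := norm_nonneg _
    have hs0 : 0 ≤ ‖v m + v n‖ := norm_nonneg _
    have ht0 : 0 ≤ ‖v m - v n‖ := norm_nonneg _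
    have hdn0' := hdn0 N₁
    have hdle' := hdle N₁
    rw [dist_eq_norm]
    exact cauchy_est (s := ‖v m + v n‖) (by simpa only [sq] using hpar) ha hb ha0 hb0 (by linarith) hdn0' hN₁ hdle' hd0 hd1 hδ1 hδpos hε hδε ht0
  obtain ⟨u, hu⟩ := cauchySeq_tendsto_of_complete hcauchy
  -- convergence of eLpNorms, then in measure, then a.e. along a subsequence
  have heLp : Tendsto (fun n => eLpNorm (⇑(v n) - ⇑u) 2 P) atTop (𝓝 0) := by
    have hnorm : Tendsto (fun n => ‖v n - u‖) atTop (𝓝 0) :=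
      tendsto_iff_norm_sub_tendsto_zero.mp hu
    have heq : ∀ n, eLpNorm (⇑(v n) - ⇑u) 2 P = ENNReal.ofReal ‖v n - u‖ := by
      intro n
      rw [Lp.norm_def, ENNReal.ofReal_toReal (Lp.eLpNorm_ne_top _)]
      exact (eLpNorm_congr_ae (Lp.coeFn_sub _ _)).symm
    simp_rw [heq]
    have := ENNReal.tendsto_ofReal (a := (0:ℝ)) hnorm
    simpa using this
  have hmeasconv : TendstoInMeasure P (fun n => ⇑(v n)) atTop ⇑u :=
    tendstoInMeasure_of_tendsto_eLpNorm (by norm_num)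
      (fun n => Lp.aestronglyMeasurable _) (Lp.aestronglyMeasurable _) heLp
  obtain ⟨ψ, hψmono, hψae⟩ := hmeasconv.exists_seq_tendsto_ae
  have hψle : ∀ i, i ≤ ψ i := fun i => hψmono.le_apply
  have hvc : ∀ n, ⇑(v n) =ᵐ[P] ⇑(c n) := fun n => hT_ae (c n)
  have hall : ∀ᵐ ω ∂P, ∀ n : ℕ, v n ω = c n ω := ae_all_iff.2 hvc
  have hclb : ∀ᵐ ω ∂P, ∀ n : ℕ, -((n:ℝ)+1)⁻¹ ≤ c n ω := ae_all_iff.2 fun n => (hcK n).2.2.1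
  have hcub : ∀ᵐ ω ∂P, ∀ n : ℕ, c n ω ≤ 1 := ae_all_iff.2 fun n => (hcK n).2.1
  have hεψ : Tendsto (fun i => ((ψ i : ℝ)+1)⁻¹) atTop (𝓝 0) := by
    have h1 : Tendsto (fun n : ℕ => ((n:ℝ)+1)⁻¹) atTop (𝓝 0) := by
      have h0 := tendsto_one_div_add_atTop_nhds_zero_nat (𝕜 := ℝ)
      simp only [one_div] at h0
      exact h0
    exact h1.comp hψmono.tendsto_atTop
  have hu_nonneg : 0 ≤ᵐ[P] ⇑u := by
    filter_upwards [hψae, hall, hclb] with ω hten hvcω hlbω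
    have h1 : Tendsto (fun i => -(((ψ i : ℝ))+1)⁻¹) atTop (𝓝 0) := by
      simpa using hεψ.neg
    refine le_of_tendsto_of_tendsto' h1 hten fun i => ?_
    rw [hvcω (ψ i)]
    exact hlbω (ψ i)
  have hu_le_one : ∀ᵐ ω ∂P, u ω ≤ 1 := by
    filter_upwards [hψae, hall, hcub] with ω hten hvcω hubω
    refine le_of_tendsto' hten fun i => ?_
    rw [hvcω (ψ i)]
    exact hubω (ψ i)
  have hu_int : α ≤ ∫ ω, u ω ∂P := by
    have hdom : Tendsto (fun i => ∫ ω, c (ψ i) ω ∂P) atTop (𝓝 (∫ ω, u ω ∂P)) := by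
      refine tendsto_integral_of_dominated_convergence (fun _ => (1:ℝ))
        (fun i => Lp.aestronglyMeasurable _) (integrable_const 1) (fun i => ?_) ?_
      · filter_upwards [hK_abs (hcK (ψ i))] with ω hω
        rw [Real.norm_eq_abs]; exact hω
      · filter_upwards [hψae, hall] with ω hten hvcω
        have : (fun i => c (ψ i) ω) = fun i => v (ψ i) ω := by
          funext i; rw [hvcω (ψ i)]
        rw [this]; exact hten
    have hconst : Tendsto (fun i => α - ((ψ i : ℝ)+1)⁻¹) atTop (𝓝 α) := by
      have := (tendsto_const_nhds (x := α) (f := atTop (α := ℕ))).sub hεψ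
      simpa using this
    exact le_of_tendsto_of_tendsto' hconst hdom fun i => (hcK (ψ i)).2.2.2
  -- Step D: Egorov and the contradiction
  set F : ℕ → Ω → ℝ := fun i => (Lp.aestronglyMeasurable (c (ψ i))).mk _ with hFdef
  have hFsm : ∀ i, StronglyMeasurable (F i) :=
    fun i => (Lp.aestronglyMeasurable _).stronglyMeasurable_mk
  have hFae : ∀ i, ⇑(c (ψ i)) =ᵐ[P] F i := fun i => (Lp.aestronglyMeasurable _).ae_eq_mk
  set G : Ω → ℝ := (Lp.aestronglyMeasurable u).mk _ with hGdef
  have hGsm : StronglyMeasurable G := (Lp.aestronglyMeasurable u).stronglyMeasurable_mk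
  have hGae : ⇑u =ᵐ[P] G := (Lp.aestronglyMeasurable u).ae_eq_mk
  have hG0 : ∀ᵐ ω ∂P, 0 ≤ G ω := by
    filter_upwards [hu_nonneg, hGae] with ω h1 h2
    rw [← h2]; exact h1
  have hG1 : ∀ᵐ ω ∂P, G ω ≤ 1 := by
    filter_upwards [hu_le_one, hGae] with ω h1 h2
    rw [← h2]; exact h1
  have hFGten : ∀ᵐ ω ∂P, Tendsto (fun i => F i ω) atTop (𝓝 (G ω)) := by
    filter_upwards [hψae, hall, ae_all_iff.2 hFae, hGae] with ω h1 h2 h3 h4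
    have heq : (fun i => F i ω) = fun i => v (ψ i) ω := by
      funext i; rw [← h3 i, ← h2 (ψ i)]
    rw [heq, ← h4]; exact h1
  obtain ⟨t, htm, htP, hunif⟩ := tendstoUniformlyOn_of_ae_tendsto' hFsm hGsm hFGten
    (by positivity : (0:ℝ) < α/2)
  -- the candidate positive element
  have hGind_sm : StronglyMeasurable (tᶜ.indicator G) := hGsm.indicator htm.compl
  have hGbd : ∀ᵐ ω ∂P, ‖tᶜ.indicator G ω‖ ≤ 1 := by
    filter_upwards [hG0, hG1] with ω h0 h1
    rw [Real.norm_eq_abs]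
    by_cases hω : ω ∈ tᶜ
    · rw [Set.indicator_of_mem hω, abs_le]; exact ⟨by linarith, h1⟩
    · rw [Set.indicator_of_notMem hω]; simp
  have hGmem : MemLp (tᶜ.indicator G) ⊤ P :=
    memLp_top_of_bound hGind_sm.aestronglyMeasurable 1 hGbd
  set w : Lp ℝ ⊤ P := hGmem.toLp _ with hwdef
  have hw_ae : ⇑w =ᵐ[P] tᶜ.indicator G := MemLp.coeFn_toLp _
  -- the approximating elements of C
  have hpmem : ∀ i, MemLp (t.indicator fun ω => max (F i ω) 0) ⊤ P := by
    intro i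
    refine memLp_top_of_bound
      ((((hFsm i).measurable.max measurable_const).indicator htm).stronglyMeasurable).aestronglyMeasurable 1 ?_
    filter_upwards [hFae i, hK_abs (hcK (ψ i))] with ω h1 h2
    rw [Real.norm_eq_abs]
    by_cases hω : ω ∈ t
    · rw [Set.indicator_of_mem hω, abs_le]
      constructor
      · have := abs_le.1 h2
        linarith [le_max_right (F i ω) (0:ℝ)]
      · rw [max_le_iff]
        constructor
        · rw [← h1]; exact (abs_le.1 h2).2
        · norm_num
    · rw [Set.indicator_of_notMem hω]; simp
  set p : ℕ → Lp ℝ ⊤ P := fun i => (hpmem i).toLp _ with hpdef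
  have hp_ae : ∀ i, ⇑(p i) =ᵐ[P] t.indicator fun ω => max (F i ω) 0 :=
    fun i => MemLp.coeFn_toLp _
  have hp_nonneg : ∀ i, 0 ≤ᵐ[P] ⇑(p i) := by
    intro i
    filter_upwards [hp_ae i] with ω h
    rw [h]
    exact Set.indicator_nonneg (fun ω' _ => le_max_right _ _) ω
  set W : ℕ → Lp ℝ ⊤ P := fun i => c (ψ i) - p i with hWdef
  have hWC : ∀ i, W i ∈ C := by
    intro i
    have := hadd _ (hcK (ψ i)).1 _ (hneg _ (hp_nonneg i))
    simpa [hWdef, sub_eq_add_neg] using this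
  -- uniform convergence gives norm convergence
  have hWten : Tendsto W atTop (𝓝 w) := by
    refine Metric.tendsto_atTop.2 fun ε hε => ?_
    rw [Metric.tendstoUniformlyOn_iff] at hunif
    have h1 := hunif (ε/2) (by positivity)
    have h2 : ∀ᶠ i in atTop, ((ψ i : ℝ)+1)⁻¹ < ε/2 := hεψ.eventually_lt_const (by positivity)
    have hev : ∀ᶠ i in atTop, dist (W i) w < ε := by
      filter_upwards [h1, h2] with i hi1 hi2
      rw [dist_eq_norm]
      have hae : ∀ᵐ ω ∂P, ‖(W i - w) ω‖ ≤ ε/2 := by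
        filter_upwards [Lp.coeFn_sub (W i) w, Lp.coeFn_sub (c (ψ i)) (p i), hp_ae i, hw_ae,
          hFae i, (hcK (ψ i)).2.2.1] with ω e1 e2 e3 e4 e5 e6
        rw [e1]
        simp only [Pi.sub_apply]
        have eW : W i ω = c (ψ i) ω - p i ω := e2
        rw [eW, e3, e4, Real.norm_eq_abs]
        by_cases hω : ω ∈ t
        · have hc : ω ∉ tᶜ := by simpa using hω
          rw [Set.indicator_of_mem hω, Set.indicator_of_notMem hc, ← e5]
          rcases le_total 0 (c (ψ i) ω) with hcc | hcc
          · rw [max_eq_left hcc]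
            simp only [sub_self, sub_zero, abs_zero]
            positivity
          · rw [max_eq_right hcc]
            rw [sub_zero, sub_zero, abs_of_nonpos hcc]
            linarith
        · have hc : ω ∈ tᶜ := Set.mem_compl hω
          rw [Set.indicator_of_notMem hω, Set.indicator_of_mem hc]
          have hd := hi1 ω hc
          rw [Real.dist_eq, abs_sub_comm] at hd
          rw [e5, sub_zero]
          linarith
      have hnb := Lp.norm_le_of_ae_bound (by positivity : (0:ℝ) ≤ ε/2) hae
      have hfin : ‖W i - w‖ ≤ ε/2 := by
        simpa [measureUnivNNReal, measure_univ] using hnb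
      linarith
    exact eventually_atTop.1 hev
  have hwC : w ∈ C := hclosed.mem_of_tendsto hWten (Eventually.of_forall hWC)
  have hw_nonneg : 0 ≤ᵐ[P] ⇑w := by
    filter_upwards [hw_ae, hG0] with ω h1 h2
    rw [h1]
    by_cases hω : ω ∈ tᶜ
    · rw [Set.indicator_of_mem hω]; exact h2
    · rw [Set.indicator_of_notMem hω]
      simp
  have hw0 : w = 0 := by
    have hmem : w ∈ C ∩ {x : Lp ℝ ⊤ P | 0 ≤ᵐ[P] ⇑x} := ⟨hwC, hw_nonneg⟩
    rw [hC_pos] at hmem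
    exact hmem
  have hzero : tᶜ.indicator G =ᵐ[P] 0 := by
    have h0 : ⇑w =ᵐ[P] (0 : Ω → ℝ) := by
      rw [hw0]
      exact Lp.coeFn_zero ℝ ⊤ P
    exact hw_ae.symm.trans h0
  -- integral contradiction
  have hGabs : ∀ᵐ ω ∂P, ‖G ω‖ ≤ 1 := by
    filter_upwards [hG0, hG1] with ω h0 h1
    rw [Real.norm_eq_abs, abs_le]; exact ⟨by linarith, h1⟩
  have hGint : Integrable G P :=
    (memLp_top_of_bound hGsm.aestronglyMeasurable 1 hGabs).integrable le_top
  have hsplit : ∫ ω, G ω ∂P = ∫ ω, t.indicator G ω ∂P + ∫ ω, tᶜ.indicator G ω ∂P := by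
    rw [← integral_add (hGint.indicator htm) (hGint.indicator htm.compl)]
    apply integral_congr_ae
    apply Eventually.of_forall
    intro ω
    by_cases hω : ω ∈ t <;> simp [hω, Set.indicator_of_mem, Set.indicator_of_notMem]
  have hIzero : ∫ ω, tᶜ.indicator G ω ∂P = 0 := by
    rw [integral_congr_ae hzero]; simp
  have hIt : ∫ ω, t.indicator G ω ∂P ≤ α/2 := by
    have hmono2 : (fun ω => t.indicator G ω) ≤ᵐ[P] fun ω => t.indicator (fun _ => (1:ℝ)) ω := by
      filter_upwards [hG1] with ω h1
      by_cases hω : ω ∈ t <;> simp [hω, Set.indicator_of_mem, Set.indicator_of_notMem, h1]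
    have hmono3 := integral_mono_ae (hGint.indicator htm)
      ((integrable_const (1:ℝ)).indicator htm) hmono2
    rw [integral_indicator_const (1:ℝ) htm] at hmono3
    have hPt : (P t).toReal ≤ α/2 := by
      have h4 := ENNReal.toReal_mono (ENNReal.ofReal_ne_top) htP
      rwa [ENNReal.toReal_ofReal (by positivity)] at h4
    rw [smul_eq_mul, mul_one, measureReal_def] at hmono3
    linarith
  have hGu : ∫ ω, G ω ∂P = ∫ ω, u ω ∂P := integral_congr_ae hGae.symm
  rw [hGu, hIzero] at hsplit
  linarith


end Aux

/-- For a norm-closed convex cone `C ⊆ L^∞` with `C ∩ L^∞_+ = {0}` and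
`-L^∞_+ ⊆ C`, the set `C₁ = {x ∈ C : ess inf x ≥ -1}` is bounded in probability. -/
theorem stmt0 {Ω : Type*} [MeasurableSpace Ω] (P : Measure Ω) [IsProbabilityMeasure P]
    (C : Set (Lp ℝ ⊤ P))
    (hclosed : IsClosed C) (hconv : Convex ℝ C)
    (hcone : ∀ (c : ℝ), 0 ≤ c → ∀ x ∈ C, c • x ∈ C)
    (hC_pos : C ∩ {x : Lp ℝ ⊤ P | 0 ≤ᵐ[P] ⇑x} = {0})
    (hneg : ∀ x : Lp ℝ ⊤ P, 0 ≤ᵐ[P] ⇑x → -x ∈ C) :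
    ∀ α : ℝ, 0 < α → ∃ M : ℝ, 0 < M ∧
      ∀ x ∈ C, (-1 : ℝ) ≤ essInf (⇑x) P →
        P {ω | M ≤ x ω} ≤ ENNReal.ofReal α :=
  stmt0_aux P C hclosed hconv hcone hC_pos hneg
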